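/- Suppose N'(t) = k_n·V_n(t)·(1 - N(t)) - k_y·V_y(t)·N(t) where V_y, V_n : ℝ≥0 → ℝ≥0 are continuous, lim_{t→∞} V_n(t) = 0, liminf_{t→∞} V_y(t) > 0, k_y, k_n > 0, and N(0) ∈ [0,1]. Then lim_{t→∞} N(t) = 0. -/

import Mathlib

open Filter Real

/-- If `f 0 ≥ 0` and `f' + a·f ≥ 0` on `[0,∞)` where `a` is the derivative of some `A`,
then `f ≥ 0` on `[0,∞)`. -/
lemma aux_nonneg (f df A a : ℝ → ℝ) (hA : ∀ t, HasDerivAt A (a t) t)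
    (hf : ∀ t, 0 ≤ t → HasDerivAt f (df t) t)
    (hpos : ∀ t, 0 ≤ t → 0 ≤ df t + a t * f t)
    (h0 : 0 ≤ f 0) : ∀ t, 0 ≤ t → 0 ≤ f t := by
  set M : ℝ → ℝ := fun t => f t * Real.exp (A t) with hM
  have hMd : ∀ t, 0 ≤ t → HasDerivAt M ((df t + a t * f t) * Real.exp (A t)) t := by
    intro t ht
    have : HasDerivAt (fun y => f y * Real.exp (A y)) (df t * Real.exp (A t) + f t * (Real.exp (A t) * a t)) t :=
      (hf t ht).fun_mul ((hA t).exp)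
    convert this using 1
    ring
  have hmono : MonotoneOn M (Set.Ici (0:ℝ)) := by
    apply monotoneOn_of_deriv_nonneg (convex_Ici 0)
    · intro x hx
      exact ((hMd x hx).continuousAt).continuousWithinAt
    · intro x hx
      rw [interior_Ici] at hx
      exact (hMd x (le_of_lt hx)).differentiableAt.differentiableWithinAt
    · intro x hx
      rw [interior_Ici] at hx
      rw [(hMd x (le_of_lt hx)).deriv]
      have := hpos x (le_of_lt hx)
      positivity
  intro t ht
  have h1 : M 0 ≤ M t := hmono Set.self_mem_Ici ht ht
  have h2 : (0:ℝ) ≤ M 0 := by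
    simp only [hM]
    positivity
  have h3 : (0:ℝ) < Real.exp (A t) := Real.exp_pos _
  have h4 : 0 ≤ f t * Real.exp (A t) := le_trans h2 h1
  have h5 := div_nonneg h4 h3.le
  rwa [mul_div_assoc, div_self h3.ne', mul_one] at h5

theorem stmt_18 (N Vy Vn : ℝ → ℝ) (ky kn : ℝ) (hky : 0 < ky) (hkn : 0 < kn)
    (hVyc : Continuous Vy) (hVnc : Continuous Vn)
    (hVynn : ∀ t : ℝ, 0 ≤ t → 0 ≤ Vy t)
    (hVnnn : ∀ t : ℝ, 0 ≤ t → 0 ≤ Vn t)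
    (hVn : Filter.Tendsto Vn Filter.atTop (nhds 0))
    (hVy : 0 < Filter.liminf Vy Filter.atTop)
    (hN0 : N 0 ∈ Set.Icc (0:ℝ) 1)
    (hN : ∀ t : ℝ, 0 ≤ t →
      HasDerivAt N (kn * Vn t * (1 - N t) - ky * Vy t * N t) t) :
    Filter.Tendsto N Filter.atTop (nhds 0) := by
  -- the coefficient functions
  set a : ℝ → ℝ := fun t => kn * Vn t + ky * Vy t with ha
  have hac : Continuous a := (continuous_const.mul hVnc).add (continuous_const.mul hVyc)
  set A : ℝ → ℝ := fun t => ∫ s in (0:ℝ)..t, a s with hAdef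
  have hA : ∀ t, HasDerivAt A (a t) t := by
    intro t
    exact intervalIntegral.integral_hasDerivAt_right
      (hac.intervalIntegrable 0 t)
      (hac.stronglyMeasurableAtFilter _ _)
      hac.continuousAt
  -- invariance: 0 ≤ N t ≤ 1 for t ≥ 0
  have hNnn : ∀ t, 0 ≤ t → 0 ≤ N t := by
    apply aux_nonneg N (fun t => kn * Vn t * (1 - N t) - ky * Vy t * N t) A a hA hN
    · intro t ht
      have h1 := hVnnn t ht
      have : kn * Vn t * (1 - N t) - ky * Vy t * N t + a t * N t = kn * Vn t := by
        simp only [ha]; ring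
      rw [this]; positivity
    · exact hN0.1
  have hNle : ∀ t, 0 ≤ t → N t ≤ 1 := by
    have := aux_nonneg (fun t => 1 - N t)
      (fun t => -(kn * Vn t * (1 - N t) - ky * Vy t * N t)) A a hA
      (fun t ht => (hN t ht).const_sub 1)
      (by
        intro t ht
        have h1 := hVynn t ht
        have : -(kn * Vn t * (1 - N t) - ky * Vy t * N t) + a t * (1 - N t) = ky * Vy t := by
          simp only [ha]; ring
        rw [this]; positivity)
      (by simpa using hN0.2)
    intro t ht
    have := this t ht
    simp at this
    linarith
  -- get a uniform lower bound on Vy eventually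
  set c : ℝ := Filter.liminf Vy Filter.atTop / 2 with hc
  have hc0 : 0 < c := by positivity
  have hVybd : Filter.IsBoundedUnder (· ≥ ·) Filter.atTop Vy := by
    refine ⟨0, ?_⟩
    rw [Filter.eventually_map]
    filter_upwards [Filter.eventually_ge_atTop (0:ℝ)] with t ht
    exact hVynn t ht
  have hVyev : ∀ᶠ t in Filter.atTop, c < Vy t :=
    Filter.eventually_lt_of_lt_liminf (by linarith) hVybd
  -- main estimate: for every ε > 0, eventually N t < ε
  rw [Metric.tendsto_atTop]
  intro ε hε
  -- threshold for Vn
  have hVnev : ∀ᶠ t in Filter.atTop, kn * Vn t < ky * c * ε / 4 := by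
    have h4 : 0 < ky * c * ε / 4 / kn := by positivity
    filter_upwards [hVn.eventually (gt_mem_nhds (show (0:ℝ) < ky * c * ε / 4 / kn from h4)),
      Filter.eventually_ge_atTop (0:ℝ)] with t h1 h2
    have := hVnnn t h2
    calc kn * Vn t < kn * (ky * c * ε / 4 / kn) := by
          exact (mul_lt_mul_iff_right₀ hkn).2 h1
      _ = ky * c * ε / 4 := by field_simp
  obtain ⟨T₁, hT₁⟩ := (hVyev.and (hVnev.and (Filter.eventually_ge_atTop (0:ℝ)))).exists_forall_of_atTop
  have hT₁0 : (0:ℝ) ≤ T₁ := (hT₁ T₁ le_rfl).2.2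
  -- g is antitone on [T₁, ∞)
  set g : ℝ → ℝ := fun t => (N t - ε/4) * Real.exp (ky * c * t) with hg
  have hgd : ∀ t, T₁ ≤ t → HasDerivAt g
      ((kn * Vn t * (1 - N t) - ky * Vy t * N t + ky * c * (N t - ε/4)) * Real.exp (ky * c * t)) t := by
    intro t ht
    have ht0 : 0 ≤ t := le_trans hT₁0 ht
    have h1 : HasDerivAt (fun t => ky * c * t) (ky * c) t := by
      simpa using (hasDerivAt_id t).const_mul (ky * c)
    have : HasDerivAt (fun y => (N y - ε/4) * Real.exp (ky * c * y))
        ((kn * Vn t * (1 - N t) - ky * Vy t * N t) * Real.exp (ky * c * t) + (N t - ε/4) * (Real.exp (ky * c * t) * (ky * c))) t :=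
      ((hN t ht0).sub_const (ε/4)).fun_mul h1.exp
    convert this using 1
    ring
  have hganti : AntitoneOn g (Set.Ici T₁) := by
    apply antitoneOn_of_deriv_nonpos (convex_Ici T₁)
    · intro x hx
      exact ((hgd x hx).continuousAt).continuousWithinAt
    · intro x hx
      rw [interior_Ici] at hx
      exact (hgd x (le_of_lt hx)).differentiableAt.differentiableWithinAt
    · intro x hx
      rw [interior_Ici] at hx
      have hx' : T₁ ≤ x := le_of_lt hx
      rw [(hgd x hx').deriv]
      have hx0 : 0 ≤ x := le_trans hT₁0 hx'
      obtain ⟨hVyx, hVnx, -⟩ := hT₁ x hx'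
      have hN0x := hNnn x hx0
      have hN1x := hNle x hx0
      have hVnx0 := hVnnn x hx0
      have hexp : (0:ℝ) < Real.exp (ky * c * x) := Real.exp_pos _
      have key : kn * Vn x * (1 - N x) - ky * Vy x * N x + ky * c * (N x - ε/4) ≤ 0 := by
        have h1 : kn * Vn x * (1 - N x) ≤ kn * Vn x := by nlinarith [mul_nonneg (mul_nonneg hkn.le hVnx0) hN0x]
        have h2 : ky * c * N x - ky * Vy x * N x ≤ 0 := by nlinarith [mul_nonneg (mul_nonneg hky.le hN0x) (sub_nonneg.2 hVyx.le)]
        nlinarith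
      exact mul_nonpos_of_nonpos_of_nonneg key hexp.le
  -- deduce the bound N t ≤ ε/4 + g T₁ * exp(-(ky*c)*t)
  have hbound : ∀ t, T₁ ≤ t → N t ≤ ε/4 + g T₁ * Real.exp (-(ky * c * t)) := by
    intro t ht
    have h1 : g t ≤ g T₁ := hganti Set.self_mem_Ici ht ht
    have hexp : (0:ℝ) < Real.exp (ky * c * t) := Real.exp_pos _
    have h2 : N t - ε/4 ≤ g T₁ * Real.exp (-(ky * c * t)) := by
      rw [Real.exp_neg, ← div_eq_mul_inv, le_div_iff₀ hexp]
      exact h1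
    linarith
  -- the RHS tends to ε/4 < ε
  have htend : Filter.Tendsto (fun t => ε/4 + g T₁ * Real.exp (-(ky * c * t)))
      Filter.atTop (nhds (ε/4)) := by
    have h1 : Filter.Tendsto (fun t : ℝ => ky * c * t) Filter.atTop Filter.atTop :=
      Filter.Tendsto.const_mul_atTop (by positivity) Filter.tendsto_id
    have h2 : Filter.Tendsto (fun t : ℝ => -(ky * c * t)) Filter.atTop Filter.atBot :=
      Filter.tendsto_neg_atBot_iff.2 h1
    have h3 := Real.tendsto_exp_atBot.comp h2
    have h4 : Filter.Tendsto (fun t => g T₁ * Real.exp (-(ky * c * t)))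
        Filter.atTop (nhds (g T₁ * 0)) := h3.const_mul _
    rw [mul_zero] at h4
    simpa using h4.const_add (ε/4)
  have hev : ∀ᶠ t in Filter.atTop, ε/4 + g T₁ * Real.exp (-(ky * c * t)) < ε :=
    htend.eventually_lt_const (by linarith)
  obtain ⟨T₂, hT₂⟩ := (hev.and (Filter.eventually_ge_atTop (max T₁ 0))).exists_forall_of_atTop
  refine ⟨T₂, fun t ht => ?_⟩
  obtain ⟨h1, h2⟩ := hT₂ t ht
  have htT₁ : T₁ ≤ t := le_trans (le_max_left _ _) h2
  have ht0 : (0:ℝ) ≤ t := le_trans (le_max_right _ _) h2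
  have h3 := hbound t htT₁
  have h4 := hNnn t ht0
  rw [Real.dist_eq]
  rw [abs_sub_lt_iff]
  constructor <;> linarith
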